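/- Let n ∈ ℕ, γ > 0, L > 0, h : ℝⁿ → ℝ, and let f(z) = sup_{α ∈ ℝⁿ} ( h(α) − (γ/2) Σ_i z_i α_i² ). Let z* ∈ [0,1]ⁿ, let R = { i : 0 < z*_i < 1 } be the set of fractional coordinates, and suppose |R| ≥ 1. Assume: (i) f(z*) is finite and f(z*) ≤ f(z) for every z ∈ {0,1}ⁿ; (ii) for every z ∈ {0,1}ⁿ, f(z) is finite and attained at a maximizer α*(z) with ‖α*(z)‖_∞ ≤ L. Let z be a random vector in {0,1}ⁿ with independent coordinates z_i distributed Bernoulli(z*_i). Then for every ε > 0, with probability at least 1 − |R| · exp( − 2 ε² / (γ² L⁴ |R|²) ), the rounded vector z satisfies 0 ≤ f(z) − f(z*) ≤ ε. (Theorem 3.1 of the paper, ridge penalty case, with κ = γ² L⁴ |R|² / 2.) -/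

import Mathlib

open scoped BigOperators

open MeasureTheory in
/-- Theorem 3.1 (ridge case): randomized rounding of a relaxation minimizer `zstar`
gives, with probability at least `1 - |R| exp(-2ε²/(γ²L⁴|R|²))`, a binary vector `z`
with `0 ≤ f(z) - f(zstar) ≤ ε`. -/
theorem ridge_randomized_rounding (n : ℕ) (γ L : ℝ) (hγ : 0 < γ) (hL : 0 < L)
    (h : (Fin n → ℝ) → ℝ) (f : (Fin n → ℝ) → ℝ) (αstar : (Fin n → ℝ) → (Fin n → ℝ))
    (zstar : Fin n → ℝ) (hzstar : ∀ i, 0 ≤ zstar i ∧ zstar i ≤ 1)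
    (R : Finset (Fin n)) (hR : R = Finset.univ.filter fun i => 0 < zstar i ∧ zstar i < 1)
    (hRcard : 1 ≤ R.card)
    -- `f zstar` is the supremum value at `zstar` :
    (hubstar : ∀ α : Fin n → ℝ, h α - (γ / 2) * ∑ i, zstar i * (α i) ^ 2 ≤ f zstar)
    -- `zstar` is a relaxation lower bound: `f zstar ≤ f z` for every binary `z` :
    (hmin : ∀ z : Fin n → ℝ, (∀ i, z i = 0 ∨ z i = 1) → f zstar ≤ f z)
    -- at every binary `z`, `f z` is the supremum value, attained at `αstar z` :
    (hub : ∀ z : Fin n → ℝ, (∀ i, z i = 0 ∨ z i = 1) →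
      ∀ α : Fin n → ℝ, h α - (γ / 2) * ∑ i, z i * (α i) ^ 2 ≤ f z)
    (hatt : ∀ z : Fin n → ℝ, (∀ i, z i = 0 ∨ z i = 1) →
      f z = h (αstar z) - (γ / 2) * ∑ i, z i * (αstar z i) ^ 2)
    (hbdd : ∀ z : Fin n → ℝ, (∀ i, z i = 0 ∨ z i = 1) → ∀ i, |αstar z i| ≤ L)
    -- `μ` is the product Bernoulli(zstar i) measure on `{0,1}ⁿ` :
    (μ : MeasureTheory.Measure (Fin n → Bool))
    (hμ : μ = MeasureTheory.Measure.pi fun i =>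
      (PMF.bernoulli (Real.toNNReal (zstar i))
        (Real.toNNReal_le_one.mpr (hzstar i).2)).toMeasure)
    (ε : ℝ) (hε : 0 < ε) :
    ENNReal.ofReal
        (1 - R.card * Real.exp (-(2 * ε ^ 2) / (γ ^ 2 * L ^ 4 * (R.card : ℝ) ^ 2))) ≤
      μ {ω | 0 ≤ f (fun i => if ω i then 1 else 0) - f zstar ∧
             f (fun i => if ω i then 1 else 0) - f zstar ≤ ε} := by
  subst hμ
  set μ : MeasureTheory.Measure (Fin n → Bool) := MeasureTheory.Measure.pi fun i =>
      (PMF.bernoulli (Real.toNNReal (zstar i))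
        (Real.toNNReal_le_one.mpr (hzstar i).2)).toMeasure with hμ
  have hcard : (0:ℝ) < (R.card : ℝ) := by exact_mod_cast hRcard
  set t : ℝ := 2 * ε / (γ * L ^ 2 * R.card) with ht
  have htpos : 0 < t := by positivity
  set e : ℝ := Real.exp (-(2 * ε ^ 2) / (γ ^ 2 * L ^ 4 * (R.card : ℝ) ^ 2)) with he
  have hexp : e = Real.exp (-(t ^ 2 / 2)) := by
    rw [he, ht]
    congr 1
    field_simp
  -- the per-coordinate measure computation
  have key : ∀ (i : Fin n) (b : Bool),
      μ {ω : Fin n → Bool | ω i = b}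
        = bif b then ENNReal.ofReal (zstar i) else 1 - ENNReal.ofReal (zstar i) := by
    intro i b
    have hset : {ω : Fin n → Bool | ω i = b}
        = Set.univ.pi (fun j => if j = i then {b} else Set.univ) := by
      ext ω
      simp only [Set.mem_setOf_eq, Set.mem_pi, Set.mem_univ, forall_true_left]
      constructor
      · intro hb j
        by_cases hj : j = i <;> simp [hj, hb]
      · intro hb
        have := hb i
        simpa using this
    rw [hμ, hset, MeasureTheory.Measure.pi_pi]
    rw [Finset.prod_eq_single i
      (fun j _ hj => by rw [if_neg hj]; exact MeasureTheory.measure_univ)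
      (fun hi => absurd (Finset.mem_univ i) hi)]
    rw [if_pos rfl]
    rw [PMF.toMeasure_apply_singleton _ _ (measurableSet_singleton b), PMF.bernoulli_apply]
    cases b <;> simp [ENNReal.ofReal, ENNReal.coe_sub]
  -- the deterministic bound on the good event
  have det : ∀ ω : Fin n → Bool, (∀ i ∈ R, t < zstar i → ω i = true) →
      (∀ i, i ∉ R → (if ω i then (1:ℝ) else 0) = zstar i) →
      f (fun i => if ω i then 1 else 0) - f zstar ≤ ε := by
    intro ω hG hA
    set z : Fin n → ℝ := fun i => if ω i then 1 else 0 with hz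
    have hbin : ∀ i, z i = 0 ∨ z i = 1 := by
      intro i; by_cases hwi : ω i <;> simp [hz, hwi]
    have hsum : (∑ i, (zstar i - z i) * (αstar z i) ^ 2)
        = (∑ i, zstar i * (αstar z i) ^ 2) - ∑ i, z i * (αstar z i) ^ 2 := by
      rw [← Finset.sum_sub_distrib]
      exact Finset.sum_congr rfl fun i _ => by ring
    have h1 : f z - f zstar ≤ (γ / 2) * ∑ i, (zstar i - z i) * (αstar z i) ^ 2 := by
      have h2 := hubstar (αstar z)
      have h3 := hatt z hbin
      rw [hsum]
      nlinarith [h2, h3]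
    have h2 : (∑ i, (zstar i - z i) * (αstar z i) ^ 2) ≤ R.card * (t * L ^ 2) := by
      have hsplit : (∑ i, (zstar i - z i) * (αstar z i) ^ 2)
          = (∑ i ∈ R, (zstar i - z i) * (αstar z i) ^ 2)
            + ∑ i ∈ Rᶜ, (zstar i - z i) * (αstar z i) ^ 2 := by
        rw [Finset.sum_add_sum_compl]
      have hc : (∑ i ∈ Rᶜ, (zstar i - z i) * (αstar z i) ^ 2) = 0 := by
        apply Finset.sum_eq_zero
        intro i hi
        rw [Finset.mem_compl] at hi
        have := hA i hi
        simp [hz, ← this]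
      have hr : (∑ i ∈ R, (zstar i - z i) * (αstar z i) ^ 2) ≤ R.card * (t * L ^ 2) := by
        have := Finset.sum_le_card_nsmul R (fun i => (zstar i - z i) * (αstar z i) ^ 2)
          (t * L ^ 2) ?_
        · simpa [nsmul_eq_mul] using this
        · intro i hi
          show (zstar i - z i) * (αstar z i) ^ 2 ≤ t * L ^ 2
          have hα : (αstar z i) ^ 2 ≤ L ^ 2 := by
            have := hbdd z hbin i
            have h0 := abs_le.mp this
            nlinarith [h0.1, h0.2]
          have hα0 : 0 ≤ (αstar z i) ^ 2 := sq_nonneg _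
          by_cases hwi : ω i
          · have hzi : z i = 1 := by simp [hz, hwi]
            have : zstar i - z i ≤ 0 := by
              rw [hzi]; linarith [(hzstar i).2]
            nlinarith
          · have hzi : z i = 0 := by simp [hz, hwi]
            have hti : zstar i ≤ t := by
              by_contra hcon
              push_neg at hcon
              have := hG i hi hcon
              simp [this] at hwi
            have h0 := (hzstar i).1
            rw [hzi, sub_zero]
            nlinarith
      rw [hsplit, hc, add_zero]
      exact hr
    have heq : (γ / 2) * (R.card * (t * L ^ 2)) = ε := by
      rw [ht]
      field_simp
    calc f z - f zstar ≤ (γ / 2) * ∑ i, (zstar i - z i) * (αstar z i) ^ 2 := h1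
      _ ≤ (γ / 2) * (R.card * (t * L ^ 2)) := by
          apply mul_le_mul_of_nonneg_left h2 (by positivity)
      _ = ε := heq
  -- the event and bad sets
  set E : Set (Fin n → Bool) := {ω | 0 ≤ f (fun i => if ω i then 1 else 0) - f zstar ∧
             f (fun i => if ω i then 1 else 0) - f zstar ≤ ε} with hE
  set S1 : Set (Fin n → Bool) :=
    ⋃ i ∈ R.filter (fun i => t < zstar i), {ω : Fin n → Bool | ω i = false} with hS1
  set S2 : Set (Fin n → Bool) :=
    ⋃ i ∈ Rᶜ, {ω : Fin n → Bool | (if ω i then (1:ℝ) else 0) ≠ zstar i} with hS2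
  have hsub : Eᶜ ⊆ S1 ∪ S2 := by
    intro ω hω
    by_contra hmem
    rw [Set.mem_union, not_or] at hmem
    obtain ⟨hm1, hm2⟩ := hmem
    simp only [hS1, Set.mem_iUnion, Finset.mem_filter, not_exists, Set.mem_setOf_eq] at hm1
    simp only [hS2, Set.mem_iUnion, Finset.mem_compl, not_exists, Set.mem_setOf_eq,
      not_not] at hm2
    apply hω
    constructor
    · exact sub_nonneg.mpr (hmin _ (fun i => by by_cases hwi : ω i <;> simp [hwi]))
    · apply det ω
      · intro i hi hti
        by_contra hc
        exact hm1 i ⟨hi, hti⟩ (Bool.not_eq_true _ ▸ hc)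
      · intro i hi
        exact hm2 i hi
  have hS1le : μ S1 ≤ ENNReal.ofReal (R.card * e) := by
    calc μ S1 ≤ ∑ i ∈ R.filter (fun i => t < zstar i), μ {ω : Fin n → Bool | ω i = false} :=
          MeasureTheory.measure_biUnion_finset_le _ _
      _ ≤ ∑ _i ∈ R.filter (fun i => t < zstar i), ENNReal.ofReal e := by
          apply Finset.sum_le_sum
          intro i hi
          rw [Finset.mem_filter] at hi
          obtain ⟨hiR, hti⟩ := hi
          have hlt1 : zstar i < 1 := by
            rw [hR] at hiR
            exact (Finset.mem_filter.mp hiR).2.2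
          rw [key i false]
          simp only [Bool.cond_false]
          have h01 : (1:ENNReal) - ENNReal.ofReal (zstar i)
              = ENNReal.ofReal (1 - zstar i) := by
            rw [ENNReal.ofReal_sub 1 (hzstar i).1, ENNReal.ofReal_one]
          rw [h01]
          apply ENNReal.ofReal_le_ofReal
          have ht1 : t < 1 := lt_trans hti hlt1
          have : (1:ℝ) - t ≤ e := by
            rw [hexp]
            have := Real.add_one_le_exp (-(t ^ 2 / 2))
            nlinarith
          linarith
      _ ≤ R.card * ENNReal.ofReal e := by
          rw [Finset.sum_const, nsmul_eq_mul]
          apply mul_le_mul_left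
          exact_mod_cast Nat.cast_le.mpr (Finset.card_filter_le _ _)
      _ = ENNReal.ofReal (R.card * e) := by
          rw [ENNReal.ofReal_mul (Nat.cast_nonneg _), ENNReal.ofReal_natCast]
  have hS2null : μ S2 = 0 := by
    apply MeasureTheory.measure_biUnion_null_iff (Set.to_countable _) |>.mpr
    intro i hi
    have hi : i ∉ R := Finset.mem_compl.mp hi
    have hzi : zstar i = 0 ∨ zstar i = 1 := by
      rw [hR] at hi
      simp only [Finset.mem_filter, Finset.mem_univ, true_and, not_and, not_lt] at hi
      rcases lt_or_eq_of_le (hzstar i).1 with h0 | h0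
      · right; exact le_antisymm (hzstar i).2 (hi h0)
      · left; exact h0.symm
    rcases hzi with h0 | h0
    · have hss : {ω : Fin n → Bool | (if ω i then (1:ℝ) else 0) ≠ zstar i}
          ⊆ {ω : Fin n → Bool | ω i = true} := by
        intro ω hω
        simp only [Set.mem_setOf_eq, h0] at hω ⊢
        by_contra hc
        simp [Bool.not_eq_true _ ▸ hc] at hω
      apply MeasureTheory.measure_mono_null hss
      rw [key i true]
      simp [h0]
    · have hss : {ω : Fin n → Bool | (if ω i then (1:ℝ) else 0) ≠ zstar i}
          ⊆ {ω : Fin n → Bool | ω i = false} := by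
        intro ω hω
        simp only [Set.mem_setOf_eq, h0] at hω ⊢
        by_contra hc
        simp [Bool.not_eq_false _ ▸ hc] at hω
      apply MeasureTheory.measure_mono_null hss
      rw [key i false]
      simp [h0]
  have hcompl : μ Eᶜ ≤ ENNReal.ofReal (R.card * e) := by
    calc μ Eᶜ ≤ μ (S1 ∪ S2) := MeasureTheory.measure_mono hsub
      _ ≤ μ S1 + μ S2 := MeasureTheory.measure_union_le _ _
      _ ≤ ENNReal.ofReal (R.card * e) + 0 := by
          rw [hS2null]; exact add_le_add_left hS1le 0
      _ = ENNReal.ofReal (R.card * e) := add_zero _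
  have hmeasE : MeasurableSet E := (Set.to_countable E).measurableSet
  haveI hprob : MeasureTheory.IsProbabilityMeasure μ := by
    rw [hμ]; infer_instance
  have hone : μ E + μ Eᶜ = 1 := by
    rw [MeasureTheory.measure_add_measure_compl hmeasE]
    exact MeasureTheory.measure_univ
  have henonneg : (0:ℝ) ≤ (R.card : ℝ) * e := by
    rw [he]
    exact mul_nonneg (Nat.cast_nonneg _) (Real.exp_nonneg _)
  rw [ENNReal.ofReal_sub 1 henonneg, ENNReal.ofReal_one]
  rw [tsub_le_iff_right]
  calc (1:ENNReal) = μ E + μ Eᶜ := hone.symm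
    _ ≤ μ E + ENNReal.ofReal (R.card * e) := add_le_add_right hcompl _
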